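/- arXiv:2311.02334 — 2 statements merged into one kernel-verified Lean document; each statement's English description precedes it below -/
import Mathlib

section
/- For the Weyl Hamiltonian H(p) = ½ p·σ, the matrix elements D^k_{+−}(ω) = ⟨Ψ_+(ω), ½σ_k Ψ_−(ω)⟩ satisfy ∫_{S²} ω^j D^k_{+−}(ω) D^l_{−+}(ω) dω = (iπ/3) ε_{jkl}, where ε_{jkl} is the Levi-Civita symbol, for all j,k,l ∈ {1,2,3}. -/
open Matrix Complex MeasureTheory

noncomputable section

def pauli : Fin 3 → Matrix (Fin 2) (Fin 2) ℂ :=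
  ![!![0, 1; 1, 0], !![0, -Complex.I; Complex.I, 0], !![1, 0; 0, -1]]

/-- The Levi-Civita symbol on `{0,1,2}` (with `ε_{012} = 1`), via the closed formula
`ε_{jkl} = (k−j)(l−k)(l−j)/2`. -/
def leviCivita (j k l : Fin 3) : ℝ :=
  (((k : ℤ) - (j : ℤ)) * ((l : ℤ) - (k : ℤ)) * ((l : ℤ) - (j : ℤ)) : ℤ) / 2

/-- The surface measure on the unit sphere `S² ⊂ ℝ³`. -/
def sphereMeasure : Measure (Metric.sphere (0 : EuclideanSpace ℝ (Fin 3)) 1) :=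
  (volume : Measure (EuclideanSpace ℝ (Fin 3))).toSphere

open Pointwise

abbrev E3 := EuclideanSpace ℝ (Fin 3)
abbrev S2 := Metric.sphere (0 : E3) 1

instance : IsFiniteMeasure sphereMeasure := by
  unfold sphereMeasure; infer_instance

lemma cont_integrable {f : S2 → ℝ} (hf : Continuous f) : Integrable f sphereMeasure :=
  hf.integrable_of_hasCompactSupport (HasCompactSupport.of_compactSpace f)

def sphLift (L : E3 ≃ₗᵢ[ℝ] E3) : S2 → S2 := fun ω =>
  ⟨L ω, by
    have h := mem_sphere_zero_iff_norm.mp ω.2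
    simpa [mem_sphere_zero_iff_norm, L.norm_map] using h⟩

lemma sphLift_coe (L : E3 ≃ₗᵢ[ℝ] E3) (ω : S2) : (sphLift L ω : E3) = L ω := rfl

lemma continuous_sphLift (L : E3 ≃ₗᵢ[ℝ] E3) : Continuous (sphLift L) := by
  apply Continuous.subtype_mk
  exact L.continuous.comp continuous_subtype_val

open Set in
lemma map_sphLift (L : E3 ≃ₗᵢ[ℝ] E3) :
    Measure.map (sphLift L) sphereMeasure = sphereMeasure := by
  refine Measure.ext fun s hs => ?_
  rw [Measure.map_apply (continuous_sphLift L).measurable hs]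
  have hps : MeasurableSet (sphLift L ⁻¹' s) := hs.preimage (continuous_sphLift L).measurable
  rw [sphereMeasure, Measure.toSphere_apply' _ hps, Measure.toSphere_apply' _ hs]
  congr 1
  have hset : (Subtype.val '' (sphLift L ⁻¹' s)) = L ⁻¹' (Subtype.val '' s) := by
    ext x
    constructor
    · rintro ⟨ω, hω, rfl⟩
      exact ⟨sphLift L ω, hω, rfl⟩
    · rintro ⟨ω, hω, hx⟩
      have hxs : x ∈ Metric.sphere (0:E3) 1 := by
        have : ‖(ω : E3)‖ = 1 := mem_sphere_zero_iff_norm.mp ω.2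
        rw [hx] at this
        rw [L.norm_map] at this
        simpa [mem_sphere_zero_iff_norm]
      refine ⟨⟨x, hxs⟩, ?_, rfl⟩
      have h2 : sphLift L ⟨x, hxs⟩ = ω := Subtype.ext hx.symm
      show sphLift L ⟨x, hxs⟩ ∈ s
      rw [h2]; exact hω
  rw [hset]
  have hsmul : (Ioo (0:ℝ) 1) • (L ⁻¹' (Subtype.val '' s)) = L ⁻¹' ((Ioo (0:ℝ) 1) • (Subtype.val '' s)) := by
    ext x
    constructor
    · rintro ⟨r, hr, y, hy, rfl⟩
      exact ⟨r, hr, L y, hy, (L.map_smul r y).symm⟩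
    · rintro ⟨r, hr, y, hy, hxy⟩
      refine ⟨r, hr, L.symm y, ?_, ?_⟩
      · show L (L.symm y) ∈ Subtype.val '' s
        simpa using hy
      · have := congrArg L.symm hxy
        rw [L.symm_apply_apply] at this
        rw [← this, LinearIsometryEquiv.map_smul]
  rw [hsmul]
  have h1 := MeasurableEquiv.map_apply L.toHomeomorph.toMeasurableEquiv (μ := volume)
    ((Ioo (0:ℝ) 1) • (Subtype.val '' s))
  have h2 : Measure.map (⇑L.toHomeomorph.toMeasurableEquiv) volume = volume :=
    L.measurePreserving.map_eq
  rw [h2] at h1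
  exact h1.symm

def sphHomeo (L : E3 ≃ₗᵢ[ℝ] E3) : S2 ≃ₜ S2 where
  toFun := sphLift L
  invFun := sphLift L.symm
  left_inv ω := Subtype.ext (by simp [sphLift_coe])
  right_inv ω := Subtype.ext (by simp [sphLift_coe])
  continuous_toFun := continuous_sphLift L
  continuous_invFun := continuous_sphLift L.symm

lemma integral_sphLift (L : E3 ≃ₗᵢ[ℝ] E3) (f : S2 → ℝ) :
    ∫ ω, f (sphLift L ω) ∂sphereMeasure = ∫ ω, f ω ∂sphereMeasure :=
  MeasurePreserving.integral_comp ⟨(continuous_sphLift L).measurable, map_sphLift L⟩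
    (sphHomeo L).measurableEmbedding f

open Real in
lemma vol_ball3 : (volume (Metric.ball (0:E3) 1)).toReal = 4/3*Real.pi := by
  rw [EuclideanSpace.volume_ball]
  have h32 : Real.Gamma ((Fintype.card (Fin 3):ℝ)/2+1) = 3/4*Real.sqrt Real.pi := by
    have : (Fintype.card (Fin 3):ℝ)/2+1 = (3:ℝ)/2 + 1 := by norm_num
    rw [this, Real.Gamma_add_one (by norm_num)]
    have h2 : (3:ℝ)/2 = 1/2 + 1 := by norm_num
    rw [h2, Real.Gamma_add_one (by norm_num), Real.Gamma_one_half_eq]; ring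
  rw [h32]
  have hs : Real.sqrt Real.pi ^ Fintype.card (Fin 3) / (3/4*Real.sqrt Real.pi)
      = 4/3*Real.pi := by
    rw [Fintype.card_fin, show (Real.sqrt Real.pi)^3 = Real.pi * Real.sqrt Real.pi by
      rw [pow_succ, Real.sq_sqrt Real.pi_pos.le]]
    rw [div_eq_iff (by positivity)]
    ring
  rw [hs]
  simp [ENNReal.toReal_ofReal (by positivity : (0:ℝ) ≤ 4/3*Real.pi)]

lemma sphere_univ_toReal : (sphereMeasure Set.univ).toReal = 4*Real.pi := by
  rw [sphereMeasure, Measure.toSphere_apply_univ]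
  have hdim : Module.finrank ℝ E3 = 3 := by simp [finrank_euclideanSpace]
  rw [hdim, ENNReal.toReal_mul, vol_ball3]
  norm_num
  ring

lemma integral_odd (f : S2 → ℝ)
    (hodd : ∀ ω : S2, f (sphLift (LinearIsometryEquiv.neg ℝ) ω) = - f ω) :
    ∫ ω, f ω ∂sphereMeasure = 0 := by
  have h := integral_sphLift (LinearIsometryEquiv.neg ℝ) f
  simp only [hodd, integral_neg] at h
  linarith

lemma continuous_coord (j : Fin 3) : Continuous (fun ω : S2 => (ω : E3) j) := by
  exact ((EuclideanSpace.proj j).continuous).comp continuous_subtype_val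

lemma sum_coord_sq (ω : S2) : ∑ j : Fin 3, ((ω : E3) j)^2 = 1 := by
  have h := mem_sphere_zero_iff_norm.mp ω.2
  rw [EuclideanSpace.norm_eq] at h
  have := congrArg (fun t : ℝ => t^2) h
  simpa [Real.sq_sqrt (Finset.sum_nonneg fun i _ => sq_nonneg _)] using this

lemma integral_coord_mul (j m : Fin 3) :
    ∫ ω, ((ω : E3) j) * ((ω : E3) m) ∂sphereMeasure
      = if j = m then 4*Real.pi/3 else 0 := by
  rcases eq_or_ne j m with rfl | hne
  · rw [if_pos rfl]
    -- swap symmetry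
    have hswap : ∀ i : Fin 3, ∫ ω, ((ω : E3) i)^2 ∂sphereMeasure
        = ∫ ω, ((ω : E3) 0)^2 ∂sphereMeasure := by
      intro i
      have h := integral_sphLift (LinearIsometryEquiv.piLpCongrLeft 2 ℝ ℝ (Equiv.swap i 0))
        (fun ω : S2 => ((ω : E3) 0)^2)
      have hcoord : ∀ ω : S2,
          ((sphLift (LinearIsometryEquiv.piLpCongrLeft 2 ℝ ℝ (Equiv.swap i 0)) ω : E3) 0)
            = (ω : E3) i := by
        intro ω
        rw [sphLift_coe]
        rw [LinearIsometryEquiv.piLpCongrLeft_apply]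
        simp only [Equiv.piCongrLeft'_apply]
        exact congrArg _ (Equiv.swap_apply_right i 0)
      simp only [hcoord] at h
      exact h
    have hsum : ∫ ω, (∑ i : Fin 3, ((ω : E3) i)^2) ∂sphereMeasure
        = ∑ i : Fin 3, ∫ ω, ((ω : E3) i)^2 ∂sphereMeasure := by
      apply integral_finset_sum
      intro i _
      exact cont_integrable ((continuous_coord i).pow 2)
    have h1 : ∫ ω, (∑ i : Fin 3, ((ω : E3) i)^2) ∂sphereMeasure = 4*Real.pi := by
      rw [integral_congr_ae (Filter.Eventually.of_forall (fun ω => sum_coord_sq ω))]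
      simp [sphere_univ_toReal]
      exact sphere_univ_toReal
    rw [hsum] at h1
    have h2 : (3:ℝ) * ∫ ω, ((ω : E3) 0)^2 ∂sphereMeasure = 4*Real.pi := by
      rw [← h1, Fin.sum_univ_three, hswap 1, hswap 2]; ring
    have := hswap j
    rw [show ∫ ω, ((ω : E3) j) * ((ω : E3) j) ∂sphereMeasure
        = ∫ ω, ((ω : E3) j)^2 ∂sphereMeasure by congr 1; funext ω; ring, this]
    linarith
  · rw [if_neg hne]
    set L := LinearIsometryEquiv.piLpCongrRight (ι := Fin 3) 2
      (fun i => if i = j then LinearIsometryEquiv.neg ℝ else LinearIsometryEquiv.refl ℝ ℝ) with hL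
    have h := integral_sphLift L (fun ω : S2 => ((ω : E3) j) * ((ω : E3) m))
    have hco : ∀ (ω : S2) (i : Fin 3), ((sphLift L ω : E3)) i
        = (if i = j then LinearIsometryEquiv.neg ℝ else LinearIsometryEquiv.refl ℝ ℝ) ((ω : E3) i) := by
      intro ω i
      rw [sphLift_coe, hL, LinearIsometryEquiv.piLpCongrRight_apply]
    have heq : ∀ ω : S2, ((sphLift L ω : E3) j) * ((sphLift L ω : E3) m)
        = -(((ω : E3) j) * ((ω : E3) m)) := by
      intro ω
      rw [hco, hco, if_pos rfl, if_neg hne.symm]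
      simp
    simp only [heq, integral_neg] at h
    linarith


lemma pair_plus (x y z : ℝ) (a b : ℂ)
    (hN : (starRingEnd ℂ) a * a + (starRingEnd ℂ) b * b = 1)
    (hE1 : (z:ℂ)*a + ((x:ℂ) - Complex.I*y)*b = a)
    (hE2 : ((x:ℂ) + Complex.I*y)*a - (z:ℂ)*b = b) :
    a * (starRingEnd ℂ) a = (1+(z:ℂ))/2 ∧ b * (starRingEnd ℂ) b = (1-(z:ℂ))/2 ∧
    a * (starRingEnd ℂ) b = ((x:ℂ) - Complex.I*y)/2 ∧
    b * (starRingEnd ℂ) a = ((x:ℂ) + Complex.I*y)/2 := by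
  have hE1c : (z:ℂ)*(starRingEnd ℂ) a + ((x:ℂ) + Complex.I*y)*(starRingEnd ℂ) b
      = (starRingEnd ℂ) a := by
    have h := congrArg (starRingEnd ℂ) hE1
    simp only [map_add, _root_.map_mul, map_sub, Complex.conj_ofReal, Complex.conj_I] at h
    linear_combination h
  have hE2c : ((x:ℂ) - Complex.I*y)*(starRingEnd ℂ) a - (z:ℂ)*(starRingEnd ℂ) b
      = (starRingEnd ℂ) b := by
    have h := congrArg (starRingEnd ℂ) hE2
    simp only [map_add, _root_.map_mul, map_sub, Complex.conj_ofReal, Complex.conj_I] at h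
    linear_combination h
  have h1 : a * (starRingEnd ℂ) a - b * (starRingEnd ℂ) b = (z:ℂ) := by
    linear_combination (-(starRingEnd ℂ a)) * hE1 + b * hE2c + (z:ℂ) * hN
  refine ⟨by linear_combination (h1 + hN)/2, by linear_combination (hN - h1)/2, ?_, ?_⟩
  · linear_combination (-(starRingEnd ℂ b)/2) * hE1 + (-(a/2)) * hE2c + (((x:ℂ)-Complex.I*y)/2) * hN
  · linear_combination (-(b/2)) * hE1c + (-(starRingEnd ℂ a)/2) * hE2 + (((x:ℂ)+Complex.I*y)/2) * hN

lemma pair_minus (x y z : ℝ) (c d : ℂ)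
    (hM : (starRingEnd ℂ) c * c + (starRingEnd ℂ) d * d = 1)
    (hF1 : (z:ℂ)*c + ((x:ℂ) - Complex.I*y)*d = -c)
    (hF2 : ((x:ℂ) + Complex.I*y)*c - (z:ℂ)*d = -d) :
    c * (starRingEnd ℂ) c = (1-(z:ℂ))/2 ∧ d * (starRingEnd ℂ) d = (1+(z:ℂ))/2 ∧
    c * (starRingEnd ℂ) d = -(((x:ℂ) - Complex.I*y)/2) ∧
    d * (starRingEnd ℂ) c = -(((x:ℂ) + Complex.I*y)/2) := by
  have hF1c : (z:ℂ)*(starRingEnd ℂ) c + ((x:ℂ) + Complex.I*y)*(starRingEnd ℂ) d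
      = -(starRingEnd ℂ) c := by
    have h := congrArg (starRingEnd ℂ) hF1
    simp only [map_add, _root_.map_mul, map_sub, map_neg, Complex.conj_ofReal, Complex.conj_I] at h
    linear_combination h
  have hF2c : ((x:ℂ) - Complex.I*y)*(starRingEnd ℂ) c - (z:ℂ)*(starRingEnd ℂ) d
      = -(starRingEnd ℂ) d := by
    have h := congrArg (starRingEnd ℂ) hF2
    simp only [map_add, _root_.map_mul, map_sub, map_neg, Complex.conj_ofReal, Complex.conj_I] at h
    linear_combination h
  have k1 : c * (starRingEnd ℂ) c - d * (starRingEnd ℂ) d = -(z:ℂ) := by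
    linear_combination (starRingEnd ℂ c) * hF1 - d * hF2c - (z:ℂ) * hM
  refine ⟨by linear_combination (k1 + hM)/2, by linear_combination (hM - k1)/2, ?_, ?_⟩
  · linear_combination ((starRingEnd ℂ d)/2) * hF1 + (c/2) * hF2c + (-(((x:ℂ)-Complex.I*y)/2)) * hM
  · linear_combination (d/2) * hF1c + ((starRingEnd ℂ c)/2) * hF2 + (-(((x:ℂ)+Complex.I*y)/2)) * hM

open Pointwise

lemma DD_scalar (x y z : ℝ) (hxyz : x^2+y^2+z^2 = (1:ℝ))
    (a b c d : ℂ)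
    (haa : a * (starRingEnd ℂ) a = (1+(z:ℂ))/2)
    (hbb : b * (starRingEnd ℂ) b = (1-(z:ℂ))/2)
    (hab : a * (starRingEnd ℂ) b = ((x:ℂ) - Complex.I*y)/2)
    (hba : b * (starRingEnd ℂ) a = ((x:ℂ) + Complex.I*y)/2)
    (hcc : c * (starRingEnd ℂ) c = (1-(z:ℂ))/2)
    (hdd : d * (starRingEnd ℂ) d = (1+(z:ℂ))/2)
    (hcd : c * (starRingEnd ℂ) d = -(((x:ℂ) - Complex.I*y)/2))
    (hdc : d * (starRingEnd ℂ) c = -(((x:ℂ) + Complex.I*y)/2))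
    (k l : Fin 3) :
    (![((starRingEnd ℂ) a * d + (starRingEnd ℂ) b * c)/2,
       (-Complex.I*((starRingEnd ℂ) a * d) + Complex.I*((starRingEnd ℂ) b * c))/2,
       ((starRingEnd ℂ) a * c - (starRingEnd ℂ) b * d)/2] k)
    * (![(a * (starRingEnd ℂ) d + b * (starRingEnd ℂ) c)/2,
       (Complex.I*(a * (starRingEnd ℂ) d) + -Complex.I*(b * (starRingEnd ℂ) c))/2,
       (a * (starRingEnd ℂ) c - b * (starRingEnd ℂ) d)/2] l)
    = ((((if k = l then (1:ℝ) else 0) - ![x,y,z] k * ![x,y,z] l)/4 : ℝ) : ℂ)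
      + Complex.I * (((∑ m : Fin 3, leviCivita m k l * ![x,y,z] m)/4 : ℝ) : ℂ) := by
  have hxyzC : ((x:ℂ))^2+((y:ℂ))^2+((z:ℂ))^2 = 1 := by norm_cast
  fin_cases k <;> fin_cases l
  · simp only [leviCivita, Fin.sum_univ_three, Matrix.cons_val_zero, Matrix.cons_val_one,
      Matrix.head_cons, Matrix.cons_val_two, Matrix.tail_cons]
    norm_num
    push_cast
    linear_combination ((1/4:ℂ)*d*(starRingEnd ℂ) d) * haa + ((1/4:ℂ)*c*(starRingEnd ℂ) c) * hbb + ((1/4:ℂ)*c*(starRingEnd ℂ) d) * hab + ((1/4:ℂ)*(starRingEnd ℂ) c*d) * hba + ((1/8:ℂ) + (-1/8:ℂ)*(z:ℂ)) * hcc + ((1/8:ℂ) + (1/8:ℂ)*(z:ℂ)) * hdd + ((-1/8:ℂ)*(y:ℂ)*Complex.I + (1/8:ℂ)*(x:ℂ)) * hcd + ((1/8:ℂ)*(y:ℂ)*Complex.I + (1/8:ℂ)*(x:ℂ)) * hdc + ((1/8:ℂ)) * hxyzC + ((-1/8:ℂ)*(y:ℂ)*(y:ℂ)) * Complex.I_s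q
  · simp only [leviCivita, Fin.sum_univ_three, Matrix.cons_val_zero, Matrix.cons_val_one,
      Matrix.head_cons, Matrix.cons_val_two, Matrix.tail_cons]
    norm_num
    push_cast
    linear_combination ((1/4:ℂ)*d*(starRingEnd ℂ) d*Complex.I) * haa + ((-1/4:ℂ)*c*(starRingEnd ℂ) c*Complex.I) * hbb + ((1/4:ℂ)*c*(starRingEnd ℂ) d*Complex.I) * hab + ((-1/4:ℂ)*(starRingEnd ℂ) c*d*Complex.I) * hba + ((-1/8:ℂ)*Complex.I + (1/8:ℂ)*(z:ℂ)*Complex.I) * hcc + ((1/8:ℂ)*Complex.I + (1/8:ℂ)*(z:ℂ)*Complex.I) * hdd + ((-1/8:ℂ)*(y:ℂ)*Complex.I*Complex.I + (1/8:ℂ)*(x:ℂ)*Complex.I) * hcd + ((-1/8:ℂ)*(y:ℂ)*Complex.I*Complex.I + (-1/8:ℂ)*(x:ℂ)*Complex.I) * hdc + ((1/4:ℂ)*(x:ℂ)*(y:ℂ)) * Complex.I_sq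
  · simp only [leviCivita, Fin.sum_univ_three, Matrix.cons_val_zero, Matrix.cons_val_one,
      Matrix.head_cons, Matrix.cons_val_two, Matrix.tail_cons]
    norm_num
    push_cast
    linear_combination ((1/4:ℂ)*(starRingEnd ℂ) c*d) * haa + ((-1/4:ℂ)*c*(starRingEnd ℂ) d) * hbb + ((1/4:ℂ)*c*(starRingEnd ℂ) c) * hab + ((-1/4:ℂ)*d*(starRingEnd ℂ) d) * hba + ((-1/8:ℂ)*(y:ℂ)*Complex.I + (1/8:ℂ)*(x:ℂ)) * hcc + ((-1/8:ℂ)*(y:ℂ)*Complex.I + (-1/8:ℂ)*(x:ℂ)) * hdd + ((-1/8:ℂ) + (1/8:ℂ)*(z:ℂ)) * hcd + ((1/8:ℂ) + (1/8:ℂ)*(z:ℂ)) * hdc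
  · simp only [leviCivita, Fin.sum_univ_three, Matrix.cons_val_zero, Matrix.cons_val_one,
      Matrix.head_cons, Matrix.cons_val_two, Matrix.tail_cons]
    norm_num
    push_cast
    linear_combination ((-1/4:ℂ)*d*(starRingEnd ℂ) d*Complex.I) * haa + ((1/4:ℂ)*c*(starRingEnd ℂ) c*Complex.I) * hbb + ((1/4:ℂ)*c*(starRingEnd ℂ) d*Complex.I) * hab + ((-1/4:ℂ)*(starRingEnd ℂ) c*d*Complex.I) * hba + ((1/8:ℂ)*Complex.I + (-1/8:ℂ)*(z:ℂ)*Complex.I) * hcc + ((-1/8:ℂ)*Complex.I + (-1/8:ℂ)*(z:ℂ)*Complex.I) * hdd + ((-1/8:ℂ)*(y:ℂ)*Complex.I*Complex.I + (1/8:ℂ)*(x:ℂ)*Complex.I) * hcd + ((-1/8:ℂ)*(y:ℂ)*Complex.I*Complex.I + (-1/8:ℂ)*(x:ℂ)*Complex.I) * hdc + ((1/4:ℂ)*(x:ℂ)*(y:ℂ)) * Complex.I_sq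
  · simp only [leviCivita, Fin.sum_univ_three, Matrix.cons_val_zero, Matrix.cons_val_one,
      Matrix.head_cons, Matrix.cons_val_two, Matrix.tail_cons]
    norm_num
    push_cast
    linear_combination ((-1/4:ℂ)*d*(starRingEnd ℂ) d*Complex.I*Complex.I) * haa + ((-1/4:ℂ)*c*(starRingEnd ℂ) c*Complex.I*Complex.I) * hbb + ((1/4:ℂ)*c*(starRingEnd ℂ) d*Complex.I*Complex.I) * hab + ((1/4:ℂ)*(starRingEnd ℂ) c*d*Complex.I*Complex.I) * hba + ((-1/8:ℂ)*Complex.I*Complex.I + (1/8:ℂ)*(z:ℂ)*Complex.I*Complex.I) * hcc + ((-1/8:ℂ)*Complex.I*Complex.I + (-1/8:ℂ)*(z:ℂ)*Complex.I*Complex.I) * hdd + ((-1/8:ℂ)*(y:ℂ)*Complex.I*Complex.I*Complex.I + (1/8:ℂ)*(x:ℂ)*Complex.I*Complex.I) * hcd + ((1/8:ℂ)*(y:ℂ)*Complex.I*Complex.I*Complex.I + (1/8:ℂ)*(x:ℂ)*Complex.I*Complex.I) * hdc + ((1/8:ℂ)) * hxyzC + ((-1/8:ℂ) + (-1/8:ℂ)*(z:ℂ)*(z:ℂ)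 + (1/8:ℂ)*(y:ℂ)*(y:ℂ) + (-1/8:ℂ)*(y:ℂ)*(y:ℂ)*Complex.I*Complex.I + (-1/8:ℂ)*(x:ℂ)*(x:ℂ)) * Complex.I_sq
  · simp only [leviCivita, Fin.sum_univ_three, Matrix.cons_val_zero, Matrix.cons_val_one,
      Matrix.head_cons, Matrix.cons_val_two, Matrix.tail_cons]
    norm_num
    push_cast
    linear_combination ((-1/4:ℂ)*(starRingEnd ℂ) c*d*Complex.I) * haa + ((-1/4:ℂ)*c*(starRingEnd ℂ) d*Complex.I) * hbb + ((1/4:ℂ)*c*(starRingEnd ℂ) c*Complex.I) * hab + ((1/4:ℂ)*d*(starRingEnd ℂ) d*Complex.I) * hba + ((-1/8:ℂ)*(y:ℂ)*Complex.I*Complex.I + (1/8:ℂ)*(x:ℂ)*Complex.I) * hcc + ((1/8:ℂ)*(y:ℂ)*Complex.I*Complex.I + (1/8:ℂ)*(x:ℂ)*Complex.I) * hdd + ((-1/8:ℂ)*Complex.I + (1/8:ℂ)*(z:ℂ)*Complex.I) * hcd + ((-1/8:ℂ)*Complex.I + (-1/8:ℂ)*(z:ℂ)*Complex.I) * hdc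 + ((1/4:ℂ)*(y:ℂ)*(z:ℂ)) * Complex.I_sq
  · simp only [leviCivita, Fin.sum_univ_three, Matrix.cons_val_zero, Matrix.cons_val_one,
      Matrix.head_cons, Matrix.cons_val_two, Matrix.tail_cons]
    norm_num
    push_cast
    linear_combination ((1/4:ℂ)*c*(starRingEnd ℂ) d) * haa + ((-1/4:ℂ)*(starRingEnd ℂ) c*d) * hbb + ((-1/4:ℂ)*d*(starRingEnd ℂ) d) * hab + ((1/4:ℂ)*c*(starRingEnd ℂ) c) * hba + ((1/8:ℂ)*(y:ℂ)*Complex.I + (1/8:ℂ)*(x:ℂ)) * hcc + ((1/8:ℂ)*(y:ℂ)*Complex.I + (-1/8:ℂ)*(x:ℂ)) * hdd + ((1/8:ℂ) + (1/8:ℂ)*(z:ℂ)) * hcd + ((-1/8:ℂ) + (1/8:ℂ)*(z:ℂ)) * hdc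
  · simp only [leviCivita, Fin.sum_univ_three, Matrix.cons_val_zero, Matrix.cons_val_one,
      Matrix.head_cons, Matrix.cons_val_two, Matrix.tail_cons]
    norm_num
    push_cast
    linear_combination ((1/4:ℂ)*c*(starRingEnd ℂ) d*Complex.I) * haa + ((1/4:ℂ)*(starRingEnd ℂ) c*d*Complex.I) * hbb + ((-1/4:ℂ)*d*(starRingEnd ℂ) d*Complex.I) * hab + ((-1/4:ℂ)*c*(starRingEnd ℂ) c*Complex.I) * hba + ((-1/8:ℂ)*(y:ℂ)*Complex.I*Complex.I + (-1/8:ℂ)*(x:ℂ)*Complex.I) * hcc + ((1/8:ℂ)*(y:ℂ)*Complex.I*Complex.I + (-1/8:ℂ)*(x:ℂ)*Complex.I) * hdd + ((1/8:ℂ)*Complex.I + (1/8:ℂ)*(z:ℂ)*Complex.I) * hcd + ((1/8:ℂ)*Complex.I + (-1/8:ℂ)*(z:ℂ)*Complex.I) * hdc + ((1/4:ℂ)*(y:ℂ)*(z:ℂ)) * Complex.I_sq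
  · simp only [leviCivita, Fin.sum_univ_three, Matrix.cons_val_zero, Matrix.cons_val_one,
      Matrix.head_cons, Matrix.cons_val_two, Matrix.tail_cons]
    norm_num
    push_cast
    linear_combination ((1/4:ℂ)*c*(starRingEnd ℂ) c) * haa + ((1/4:ℂ)*d*(starRingEnd ℂ) d) * hbb + ((-1/4:ℂ)*(starRingEnd ℂ) c*d) * hab + ((-1/4:ℂ)*c*(starRingEnd ℂ) d) * hba + ((1/8:ℂ) + (1/8:ℂ)*(z:ℂ)) * hcc + ((1/8:ℂ) + (-1/8:ℂ)*(z:ℂ)) * hdd + ((-1/8:ℂ)*(y:ℂ)*Complex.I + (-1/8:ℂ)*(x:ℂ)) * hcd + ((1/8:ℂ)*(y:ℂ)*Complex.I + (-1/8:ℂ)*(x:ℂ)) * hdc + ((1/8:ℂ)) * hxyzC + ((-1/8:ℂ)*(y:ℂ)*(y:ℂ)) * Complex.I_sq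

lemma sphLift_neg_coord (ω : S2) (i : Fin 3) :
    ((sphLift (LinearIsometryEquiv.neg ℝ) ω : E3)) i = -((ω : E3) i) := rfl

/-- for the Weyl Hamiltonian `H(p) = ½ p·σ`, the matrix elements
`D^k_{+−}(ω) = ⟨Ψ_+(ω), ½σ_k Ψ_−(ω)⟩` satisfy
`∫_{S²} ω^j D^k_{+−}(ω) D^l_{−+}(ω) dω = (iπ/3) ε_{jkl}` for all `j,k,l`. -/
theorem weyl_sphere_integral_omega_DD
    (Ψp Ψm : Metric.sphere (0 : EuclideanSpace ℝ (Fin 3)) 1 → (Fin 2 → ℂ))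
    (hmeasp : Measurable Ψp) (hmeasm : Measurable Ψm)
    (hnormp : ∀ ω, star (Ψp ω) ⬝ᵥ Ψp ω = 1)
    (hnormm : ∀ ω, star (Ψm ω) ⬝ᵥ Ψm ω = 1)
    (heigp : ∀ ω : Metric.sphere (0 : EuclideanSpace ℝ (Fin 3)) 1,
      (∑ i, (((ω : EuclideanSpace ℝ (Fin 3)) i : ℝ) : ℂ) • pauli i) *ᵥ Ψp ω = Ψp ω)
    (heigm : ∀ ω : Metric.sphere (0 : EuclideanSpace ℝ (Fin 3)) 1,
      (∑ i, (((ω : EuclideanSpace ℝ (Fin 3)) i : ℝ) : ℂ) • pauli i) *ᵥ Ψm ω = -(Ψm ω))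
    (D : Fin 3 → Metric.sphere (0 : EuclideanSpace ℝ (Fin 3)) 1 → ℂ)
    (hD : ∀ k ω, D k ω = star (Ψp ω) ⬝ᵥ ((((1:ℂ)/2) • pauli k) *ᵥ Ψm ω)) :
    ∀ j k l, ∫ ω, (((ω : EuclideanSpace ℝ (Fin 3)) j : ℝ) : ℂ)
        * D k ω * starRingEnd ℂ (D l ω) ∂sphereMeasure
      = Complex.I * (Real.pi / 3 : ℝ) * (leviCivita j k l : ℝ) := by
  intro j k l
  have hpoint : ∀ ω : S2, (((ω : E3) j : ℝ) : ℂ) * D k ω * starRingEnd ℂ (D l ω)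
      = ((((ω:E3) j) * (((if k = l then (1:ℝ) else 0) - (ω:E3) k * (ω:E3) l)/4) : ℝ) : ℂ)
        + Complex.I * ((((ω:E3) j) * ((∑ m : Fin 3, leviCivita m k l * (ω:E3) m)/4) : ℝ) : ℂ) := by
    intro ω
    have hxyz : ((ω:E3) 0)^2 + ((ω:E3) 1)^2 + ((ω:E3) 2)^2 = 1 := by
      have h := sum_coord_sq ω
      rwa [Fin.sum_univ_three] at h
    have hE1 : (((ω:E3) 2 : ℝ):ℂ) * Ψp ω 0 + ((((ω:E3) 0 : ℝ):ℂ) - Complex.I*(((ω:E3) 1 : ℝ):ℂ)) * Ψp ω 1 = Ψp ω 0 := by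
      have h0 := congrFun (heigp ω) 0
      simp [Matrix.mulVec, dotProduct, Fin.sum_univ_three, Fin.sum_univ_two, pauli,
        Matrix.sum_apply] at h0
      linear_combination h0
    have hE2 : ((((ω:E3) 0 : ℝ):ℂ) + Complex.I*(((ω:E3) 1 : ℝ):ℂ)) * Ψp ω 0 - (((ω:E3) 2 : ℝ):ℂ) * Ψp ω 1 = Ψp ω 1 := by
      have h1 := congrFun (heigp ω) 1
      simp [Matrix.mulVec, dotProduct, Fin.sum_univ_three, Fin.sum_univ_two, pauli,
        Matrix.sum_apply] at h1
      linear_combination h1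
    have hF1 : (((ω:E3) 2 : ℝ):ℂ) * Ψm ω 0 + ((((ω:E3) 0 : ℝ):ℂ) - Complex.I*(((ω:E3) 1 : ℝ):ℂ)) * Ψm ω 1 = -(Ψm ω 0) := by
      have h0 := congrFun (heigm ω) 0
      simp [Matrix.mulVec, dotProduct, Fin.sum_univ_three, Fin.sum_univ_two, pauli,
        Matrix.sum_apply] at h0
      linear_combination h0
    have hF2 : ((((ω:E3) 0 : ℝ):ℂ) + Complex.I*(((ω:E3) 1 : ℝ):ℂ)) * Ψm ω 0 - (((ω:E3) 2 : ℝ):ℂ) * Ψm ω 1 = -(Ψm ω 1) := by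
      have h1 := congrFun (heigm ω) 1
      simp [Matrix.mulVec, dotProduct, Fin.sum_univ_three, Fin.sum_univ_two, pauli,
        Matrix.sum_apply] at h1
      linear_combination h1
    have hN : (starRingEnd ℂ) (Ψp ω 0) * Ψp ω 0 + (starRingEnd ℂ) (Ψp ω 1) * Ψp ω 1 = 1 := by
      have h := hnormp ω
      simpa [dotProduct, Fin.sum_univ_two, Pi.star_apply, RCLike.star_def] using h
    have hM : (starRingEnd ℂ) (Ψm ω 0) * Ψm ω 0 + (starRingEnd ℂ) (Ψm ω 1) * Ψm ω 1 = 1 := by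
      have h := hnormm ω
      simpa [dotProduct, Fin.sum_univ_two, Pi.star_apply, RCLike.star_def] using h
    obtain ⟨haa, hbb, hab, hba⟩ := pair_plus ((ω:E3) 0) ((ω:E3) 1) ((ω:E3) 2) _ _ hN hE1 hE2
    obtain ⟨hcc, hdd, hcd, hdc⟩ := pair_minus ((ω:E3) 0) ((ω:E3) 1) ((ω:E3) 2) _ _ hM hF1 hF2
    have hDD := DD_scalar ((ω:E3) 0) ((ω:E3) 1) ((ω:E3) 2) hxyz
      (Ψp ω 0) (Ψp ω 1) (Ψm ω 0) (Ψm ω 1) haa hbb hab hba hcc hdd hcd hdc k l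
    have hv : ∀ i : Fin 3, (![(ω:E3) 0, (ω:E3) 1, (ω:E3) 2] : Fin 3 → ℝ) i = (ω:E3) i := by
      intro i; fin_cases i <;> rfl
    simp only [hv] at hDD
    have hDk : D k ω = ![((starRingEnd ℂ) (Ψp ω 0) * Ψm ω 1 + (starRingEnd ℂ) (Ψp ω 1) * Ψm ω 0)/2,
       (-Complex.I*((starRingEnd ℂ) (Ψp ω 0) * Ψm ω 1) + Complex.I*((starRingEnd ℂ) (Ψp ω 1) * Ψm ω 0))/2,
       ((starRingEnd ℂ) (Ψp ω 0) * Ψm ω 0 - (starRingEnd ℂ) (Ψp ω 1) * Ψm ω 1)/2] k := by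
      rw [hD]
      fin_cases k <;>
        (simp [pauli, Matrix.mulVec, dotProduct, Fin.sum_univ_two, Pi.star_apply,
          RCLike.star_def]; ring)
    have hDlc : starRingEnd ℂ (D l ω)
        = ![(Ψp ω 0 * (starRingEnd ℂ) (Ψm ω 1) + Ψp ω 1 * (starRingEnd ℂ) (Ψm ω 0))/2,
       (Complex.I*(Ψp ω 0 * (starRingEnd ℂ) (Ψm ω 1)) + -Complex.I*(Ψp ω 1 * (starRingEnd ℂ) (Ψm ω 0)))/2,
       (Ψp ω 0 * (starRingEnd ℂ) (Ψm ω 0) - Ψp ω 1 * (starRingEnd ℂ) (Ψm ω 1))/2] l := by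
      rw [hD]
      fin_cases l <;>
        (simp [pauli, Matrix.mulVec, dotProduct, Fin.sum_univ_two, Pi.star_apply,
          RCLike.star_def, map_add, _root_.map_mul, map_div₀, map_sub, map_neg, map_ofNat, _root_.map_one, map_inv₀]; ring)
    rw [hDk, hDlc, mul_assoc, hDD]
    push_cast
    ring
  simp only [hpoint]
  have hg1 : Continuous (fun ω : S2 => ((ω:E3) j) * (((if k = l then (1:ℝ) else 0) - (ω:E3) k * (ω:E3) l)/4)) := by
    apply (continuous_coord j).mul
    exact (continuous_const.sub ((continuous_coord k).mul (continuous_coord l))).div_const 4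
  have hg2 : Continuous (fun ω : S2 => ((ω:E3) j) * ((∑ m : Fin 3, leviCivita m k l * (ω:E3) m)/4)) := by
    apply (continuous_coord j).mul
    exact (continuous_finset_sum _ (fun m _ => continuous_const.mul (continuous_coord m))).div_const 4
  have hi1 : Integrable (fun ω : S2 => ((((ω:E3) j) * (((if k = l then (1:ℝ) else 0) - (ω:E3) k * (ω:E3) l)/4) : ℝ) : ℂ)) sphereMeasure :=
    (cont_integrable hg1).ofReal
  have hi2 : Integrable (fun ω : S2 => Complex.I * ((((ω:E3) j) * ((∑ m : Fin 3, leviCivita m k l * (ω:E3) m)/4) : ℝ) : ℂ)) sphereMeasure :=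
    ((cont_integrable hg2).ofReal).const_mul Complex.I
  have e1 : ∫ ω : S2, ((((ω:E3) j) * (((if k = l then (1:ℝ) else 0) - (ω:E3) k * (ω:E3) l)/4) : ℝ) : ℂ) ∂sphereMeasure
      = ((∫ ω : S2, ((ω:E3) j) * (((if k = l then (1:ℝ) else 0) - (ω:E3) k * (ω:E3) l)/4) ∂sphereMeasure : ℝ) : ℂ) :=
    integral_ofReal
  have e2 : ∫ ω : S2, ((((ω:E3) j) * ((∑ m : Fin 3, leviCivita m k l * (ω:E3) m)/4) : ℝ) : ℂ) ∂sphereMeasure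
      = ((∫ ω : S2, ((ω:E3) j) * ((∑ m : Fin 3, leviCivita m k l * (ω:E3) m)/4) ∂sphereMeasure : ℝ) : ℂ) :=
    integral_ofReal
  rw [integral_add hi1 hi2, integral_const_mul, e1, e2]
  have hint1 : ∫ ω, ((ω:E3) j) * (((if k = l then (1:ℝ) else 0) - (ω:E3) k * (ω:E3) l)/4) ∂sphereMeasure = 0 := by
    apply integral_odd
    intro ω
    simp only [sphLift_neg_coord]
    ring
  have hint2 : ∫ ω, ((ω:E3) j) * ((∑ m : Fin 3, leviCivita m k l * (ω:E3) m)/4) ∂sphereMeasure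
      = Real.pi / 3 * leviCivita j k l := by
    have hrw : ∀ ω : S2, ((ω:E3) j) * ((∑ m : Fin 3, leviCivita m k l * (ω:E3) m)/4)
        = ∑ m : Fin 3, (leviCivita m k l / 4) * (((ω:E3) j) * ((ω:E3) m)) := by
      intro ω
      rw [Finset.sum_div, Finset.mul_sum]
      exact Finset.sum_congr rfl fun m _ => by ring
    simp only [hrw]
    rw [integral_finset_sum _ (fun m _ => ((cont_integrable (f := fun ω : S2 => ((ω:E3) j) * ((ω:E3) m))
      ((continuous_coord j).mul (continuous_coord m))).const_mul (leviCivita m k l / 4)))]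
    have : ∀ m : Fin 3, ∫ ω, (leviCivita m k l / 4) * (((ω:E3) j) * ((ω:E3) m)) ∂sphereMeasure
        = (leviCivita m k l / 4) * (if j = m then 4*Real.pi/3 else 0) := by
      intro m
      rw [integral_const_mul, integral_coord_mul]
    simp only [this]
    rw [Finset.sum_eq_single j (fun m _ hm => by rw [if_neg (Ne.symm hm), mul_zero])
      (fun hj => absurd (Finset.mem_univ j) hj), if_pos rfl]
    ring
  rw [hint1, hint2]
  push_cast
  ring

end
end

section
/- Principal-value vanishing of the second-order current contribution: for the Weyl matrix elements D^k_{+−}(ω) = ⟨Ψ_+(ω), ½σ_k Ψ_−(ω)⟩ and any fixed vector v ∈ ℝ³ and 0 < r₁ < r₂ < ∞, the integral ∫_{{r₁ < |p| < r₂}} (v · Im(D_{+−}(p/|p|) D^k_{−+}(p/|p|))) / |p|² dp = 0 for each k, where Im is taken componentwise; consequently the principal value integral over ℝ³ of the same integrand is zero. -/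
open Matrix Complex MeasureTheory Filter

noncomputable section

open ComplexConjugate

private lemma weyl_key (x y z : ℝ) (a b c d : ℂ)
    (e1 : (z:ℂ)*a + ((x:ℂ) - (y:ℂ)*I)*b = a)
    (e2 : ((x:ℂ) + (y:ℂ)*I)*a - (z:ℂ)*b = b)
    (e3 : (z:ℂ)*c + ((x:ℂ) - (y:ℂ)*I)*d = -c)
    (e4 : ((x:ℂ) + (y:ℂ)*I)*c - (z:ℂ)*d = -d)
    (n1 : conj a * a + conj b * b = 1)
    (n2 : conj c * c + conj d * d = 1) :
    a * conj a = (1+(z:ℂ))/2 ∧ a * conj b = ((x:ℂ) - (y:ℂ)*I)/2 ∧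
    b * conj a = ((x:ℂ) + (y:ℂ)*I)/2 ∧ b * conj b = (1-(z:ℂ))/2 ∧
    c * conj c = (1-(z:ℂ))/2 ∧ c * conj d = -((x:ℂ) - (y:ℂ)*I)/2 ∧
    d * conj c = -((x:ℂ) + (y:ℂ)*I)/2 ∧ d * conj d = (1+(z:ℂ))/2 := by
  have e1c : (z:ℂ)*conj a + ((x:ℂ) + (y:ℂ)*I)*conj b = conj a := by
    have := congrArg conj e1
    simp only [map_add, _root_.map_mul, map_sub, Complex.conj_ofReal, Complex.conj_I] at this
    linear_combination this
  have e2c : ((x:ℂ) - (y:ℂ)*I)*conj a - (z:ℂ)*conj b = conj b := by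
    have := congrArg conj e2
    simp only [map_add, _root_.map_mul, map_sub, Complex.conj_ofReal, Complex.conj_I] at this
    linear_combination this
  have ho : conj a * c + conj b * d = 0 := by
    linear_combination ((conj a)*e3 + (conj b)*e4 - c*e1c - d*e2c)/2
  have hoc : a * conj c + b * conj d = 0 := by
    have := congrArg conj ho
    simp only [map_add, _root_.map_mul, map_zero, RingHom.id_apply,
      RingHomCompTriple.comp_apply, Complex.conj_conj] at this
    linear_combination this
  set M : Matrix (Fin 2) (Fin 2) ℂ := !![a, c; b, d] with hM
  have hMM : Mᴴ * M = 1 := by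
    ext i j
    fin_cases i <;> fin_cases j <;>
      simp [hM, Matrix.mul_apply, Fin.sum_univ_two, Matrix.conjTranspose_apply] <;>
      first
        | linear_combination n1
        | linear_combination ho
        | linear_combination hoc
        | linear_combination n2
  have hcomp := mul_eq_one_comm.mp hMM
  have hC1 : a * conj a + c * conj c = 1 := by
    have := congrFun (congrFun hcomp 0) 0
    simpa [hM, Matrix.mul_apply, Fin.sum_univ_two, Matrix.conjTranspose_apply,
      Matrix.one_apply] using this
  have hC2 : a * conj b + c * conj d = 0 := by
    have := congrFun (congrFun hcomp 0) 1
    simpa [hM, Matrix.mul_apply, Fin.sum_univ_two, Matrix.conjTranspose_apply,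
      Matrix.one_apply] using this
  have hC3 : b * conj a + d * conj c = 0 := by
    have := congrFun (congrFun hcomp 1) 0
    simpa [hM, Matrix.mul_apply, Fin.sum_univ_two, Matrix.conjTranspose_apply,
      Matrix.one_apply] using this
  have hC4 : b * conj b + d * conj d = 1 := by
    have := congrFun (congrFun hcomp 1) 1
    simpa [hM, Matrix.mul_apply, Fin.sum_univ_two, Matrix.conjTranspose_apply,
      Matrix.one_apply] using this
  have hd1 : a * conj a - c * conj c = (z:ℂ) := by
    linear_combination (-(conj a))*e1 - (conj c)*e3 + (z:ℂ)*hC1 + ((x:ℂ)-(y:ℂ)*I)*hC3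
  have hd2 : a * conj b - c * conj d = (x:ℂ) - (y:ℂ)*I := by
    linear_combination (-(conj b))*e1 - (conj d)*e3 + (z:ℂ)*hC2 + ((x:ℂ)-(y:ℂ)*I)*hC4
  have hd3 : b * conj a - d * conj c = (x:ℂ) + (y:ℂ)*I := by
    linear_combination (-(conj a))*e2 - (conj c)*e4 + ((x:ℂ)+(y:ℂ)*I)*hC1 - (z:ℂ)*hC3
  have hd4 : b * conj b - d * conj d = -(z:ℂ) := by
    linear_combination (-(conj b))*e2 - (conj d)*e4 + ((x:ℂ)+(y:ℂ)*I)*hC2 - (z:ℂ)*hC4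
  refine ⟨by linear_combination (hC1+hd1)/2, by linear_combination (hC2+hd2)/2,
    by linear_combination (hC3+hd3)/2, by linear_combination (hC4+hd4)/2,
    by linear_combination (hC1-hd1)/2, by linear_combination (hC2-hd2)/2,
    by linear_combination (hC3-hd3)/2, by linear_combination (hC4-hd4)/2⟩
private lemma weyl_im (x y z : ℝ) (a b c d : ℂ)
    (e1 : (z:ℂ)*a + ((x:ℂ) - (y:ℂ)*I)*b = a)
    (e2 : ((x:ℂ) + (y:ℂ)*I)*a - (z:ℂ)*b = b)
    (e3 : (z:ℂ)*c + ((x:ℂ) - (y:ℂ)*I)*d = -c)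
    (e4 : ((x:ℂ) + (y:ℂ)*I)*c - (z:ℂ)*d = -d)
    (n1 : conj a * a + conj b * b = 1)
    (n2 : conj c * c + conj d * d = 1) (j k : Fin 3) :
    ((![(conj a*d + conj b*c)/2, I*(conj b*c - conj a*d)/2, (conj a*c - conj b*d)/2]) j *
     conj ((![(conj a*d + conj b*c)/2, I*(conj b*c - conj a*d)/2, (conj a*c - conj b*d)/2]) k)).im
    = (![![0, z, -y], ![-z, 0, x], ![y, -x, 0]]) j k / 4 := by
  obtain ⟨haA, haB, hbA, hbB, hcC, hcD, hdC, hdD⟩ := weyl_key x y z a b c d e1 e2 e3 e4 n1 n2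
  fin_cases j <;> fin_cases k
  · -- (0,0)
    have h : (![(conj a*d + conj b*c)/2, I*(conj b*c - conj a*d)/2, (conj a*c - conj b*d)/2] : Fin 3 → ℂ) 0 *
        conj ((![(conj a*d + conj b*c)/2, I*(conj b*c - conj a*d)/2, (conj a*c - conj b*d)/2] : Fin 3 → ℂ) 0) = (((1+z^2-x^2+y^2)/8 : ℝ) : ℂ) := by
      simp only [Matrix.cons_val_zero, Matrix.cons_val_one, Matrix.head_cons, Matrix.cons_val_two,
        Matrix.tail_cons, map_div₀, map_add, map_sub, _root_.map_mul, Complex.conj_conj,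
        Complex.conj_I, Complex.conj_ofReal, map_ofNat]
      push_cast
      linear_combination (1/4 : ℂ) * (((d*conj d)*haA + ((1+(z:ℂ))/2)*hdD) + ((d*conj c)*hbA + (((x:ℂ)+(y:ℂ)*I)/2)*hdC) + ((c*conj d)*haB + (((x:ℂ)-(y:ℂ)*I)/2)*hcD) + ((c*conj c)*hbB + ((1-(z:ℂ))/2)*hcC)) - ((y:ℂ)^2/8) * Complex.I_sq
    simp only [Fin.isValue, Fin.mk_zero, Fin.mk_one, show ((⟨2, by norm_num⟩ : Fin 3)) = (2 : Fin 3) from rfl,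
      Matrix.cons_val_zero, Matrix.cons_val_one, Matrix.head_cons, Matrix.cons_val_two, Matrix.tail_cons] at h ⊢
    rw [h]
    simp [Complex.add_im, Complex.ofReal_im, Complex.mul_im, Complex.ofReal_re,
      Complex.I_im, Complex.I_re, ← Complex.ofReal_pow] <;> ring
  · -- (0,1)
    have h : (![(conj a*d + conj b*c)/2, I*(conj b*c - conj a*d)/2, (conj a*c - conj b*d)/2] : Fin 3 → ℂ) 0 *
        conj ((![(conj a*d + conj b*c)/2, I*(conj b*c - conj a*d)/2, (conj a*c - conj b*d)/2] : Fin 3 → ℂ) 1) = ((-(x*y)/4 : ℝ) : ℂ) + ((z/4 : ℝ) : ℂ)*I := by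
      simp only [Matrix.cons_val_zero, Matrix.cons_val_one, Matrix.head_cons, Matrix.cons_val_two,
        Matrix.tail_cons, map_div₀, map_add, map_sub, _root_.map_mul, Complex.conj_conj,
        Complex.conj_I, Complex.conj_ofReal, map_ofNat]
      push_cast
      linear_combination (-I/4 : ℂ) * (((d*conj c)*hbA + (((x:ℂ)+(y:ℂ)*I)/2)*hdC) - ((d*conj d)*haA + ((1+(z:ℂ))/2)*hdD) + ((c*conj c)*hbB + ((1-(z:ℂ))/2)*hcC) - ((c*conj d)*haB + (((x:ℂ)-(y:ℂ)*I)/2)*hcD)) + ((x:ℂ)*(y:ℂ)/4) * Complex.I_sq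
    simp only [Fin.isValue, Fin.mk_zero, Fin.mk_one, show ((⟨2, by norm_num⟩ : Fin 3)) = (2 : Fin 3) from rfl,
      Matrix.cons_val_zero, Matrix.cons_val_one, Matrix.head_cons, Matrix.cons_val_two, Matrix.tail_cons] at h ⊢
    rw [h]
    simp [Complex.add_im, Complex.ofReal_im, Complex.mul_im, Complex.ofReal_re,
      Complex.I_im, Complex.I_re, ← Complex.ofReal_pow] <;> ring
  · -- (0,2)
    have h : (![(conj a*d + conj b*c)/2, I*(conj b*c - conj a*d)/2, (conj a*c - conj b*d)/2] : Fin 3 → ℂ) 0 *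
        conj ((![(conj a*d + conj b*c)/2, I*(conj b*c - conj a*d)/2, (conj a*c - conj b*d)/2] : Fin 3 → ℂ) 2) = ((-(x*z)/4 : ℝ) : ℂ) + ((-(y/4) : ℝ) : ℂ)*I := by
      simp only [Matrix.cons_val_zero, Matrix.cons_val_one, Matrix.head_cons, Matrix.cons_val_two,
        Matrix.tail_cons, map_div₀, map_add, map_sub, _root_.map_mul, Complex.conj_conj,
        Complex.conj_I, Complex.conj_ofReal, map_ofNat]
      push_cast
      linear_combination (1/4 : ℂ) * (((d*conj c)*haA + ((1+(z:ℂ))/2)*hdC) - ((d*conj d)*hbA + (((x:ℂ)+(y:ℂ)*I)/2)*hdD) + ((c*conj c)*haB + (((x:ℂ)-(y:ℂ)*I)/2)*hcC) - ((c*conj d)*hbB + ((1-(z:ℂ))/2)*hcD))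
    simp only [Fin.isValue, Fin.mk_zero, Fin.mk_one, show ((⟨2, by norm_num⟩ : Fin 3)) = (2 : Fin 3) from rfl,
      Matrix.cons_val_zero, Matrix.cons_val_one, Matrix.head_cons, Matrix.cons_val_two, Matrix.tail_cons] at h ⊢
    rw [h]
    simp [Complex.add_im, Complex.ofReal_im, Complex.mul_im, Complex.ofReal_re,
      Complex.I_im, Complex.I_re, ← Complex.ofReal_pow] <;> ring
  · -- (1,0)
    have h : (![(conj a*d + conj b*c)/2, I*(conj b*c - conj a*d)/2, (conj a*c - conj b*d)/2] : Fin 3 → ℂ) 1 *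
        conj ((![(conj a*d + conj b*c)/2, I*(conj b*c - conj a*d)/2, (conj a*c - conj b*d)/2] : Fin 3 → ℂ) 0) = ((-(x*y)/4 : ℝ) : ℂ) + ((-(z/4) : ℝ) : ℂ)*I := by
      simp only [Matrix.cons_val_zero, Matrix.cons_val_one, Matrix.head_cons, Matrix.cons_val_two,
        Matrix.tail_cons, map_div₀, map_add, map_sub, _root_.map_mul, Complex.conj_conj,
        Complex.conj_I, Complex.conj_ofReal, map_ofNat]
      push_cast
      linear_combination (I/4 : ℂ) * (((c*conj d)*haB + (((x:ℂ)-(y:ℂ)*I)/2)*hcD) + ((c*conj c)*hbB + ((1-(z:ℂ))/2)*hcC) - ((d*conj d)*haA + ((1+(z:ℂ))/2)*hdD) - ((d*conj c)*hbA + (((x:ℂ)+(y:ℂ)*I)/2)*hdC)) + ((x:ℂ)*(y:ℂ)/4) * Complex.I_sq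
    simp only [Fin.isValue, Fin.mk_zero, Fin.mk_one, show ((⟨2, by norm_num⟩ : Fin 3)) = (2 : Fin 3) from rfl,
      Matrix.cons_val_zero, Matrix.cons_val_one, Matrix.head_cons, Matrix.cons_val_two, Matrix.tail_cons] at h ⊢
    rw [h]
    simp [Complex.add_im, Complex.ofReal_im, Complex.mul_im, Complex.ofReal_re,
      Complex.I_im, Complex.I_re, ← Complex.ofReal_pow] <;> ring
  · -- (1,1)
    have h : (![(conj a*d + conj b*c)/2, I*(conj b*c - conj a*d)/2, (conj a*c - conj b*d)/2] : Fin 3 → ℂ) 1 *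
        conj ((![(conj a*d + conj b*c)/2, I*(conj b*c - conj a*d)/2, (conj a*c - conj b*d)/2] : Fin 3 → ℂ) 1) = (((1+z^2+x^2-y^2)/8 : ℝ) : ℂ) := by
      simp only [Matrix.cons_val_zero, Matrix.cons_val_one, Matrix.head_cons, Matrix.cons_val_two,
        Matrix.tail_cons, map_div₀, map_add, map_sub, _root_.map_mul, Complex.conj_conj,
        Complex.conj_I, Complex.conj_ofReal, map_ofNat]
      push_cast
      linear_combination (-I*I/4 : ℂ) * (((c*conj c)*hbB + ((1-(z:ℂ))/2)*hcC) - ((c*conj d)*haB + (((x:ℂ)-(y:ℂ)*I)/2)*hcD) - ((d*conj c)*hbA + (((x:ℂ)+(y:ℂ)*I)/2)*hdC) + ((d*conj d)*haA + ((1+(z:ℂ))/2)*hdD)) + (-(y:ℂ)^2/8*I^2 - 1/8 - (z:ℂ)^2/8 - (x:ℂ)^2/8 + (y:ℂ)^2/8) * Complex.I_sq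
    simp only [Fin.isValue, Fin.mk_zero, Fin.mk_one, show ((⟨2, by norm_num⟩ : Fin 3)) = (2 : Fin 3) from rfl,
      Matrix.cons_val_zero, Matrix.cons_val_one, Matrix.head_cons, Matrix.cons_val_two, Matrix.tail_cons] at h ⊢
    rw [h]
    simp [Complex.add_im, Complex.ofReal_im, Complex.mul_im, Complex.ofReal_re,
      Complex.I_im, Complex.I_re, ← Complex.ofReal_pow] <;> ring
  · -- (1,2)
    have h : (![(conj a*d + conj b*c)/2, I*(conj b*c - conj a*d)/2, (conj a*c - conj b*d)/2] : Fin 3 → ℂ) 1 *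
        conj ((![(conj a*d + conj b*c)/2, I*(conj b*c - conj a*d)/2, (conj a*c - conj b*d)/2] : Fin 3 → ℂ) 2) = ((-(y*z)/4 : ℝ) : ℂ) + ((x/4 : ℝ) : ℂ)*I := by
      simp only [Matrix.cons_val_zero, Matrix.cons_val_one, Matrix.head_cons, Matrix.cons_val_two,
        Matrix.tail_cons, map_div₀, map_add, map_sub, _root_.map_mul, Complex.conj_conj,
        Complex.conj_I, Complex.conj_ofReal, map_ofNat]
      push_cast
      linear_combination (I/4 : ℂ) * (((c*conj c)*haB + (((x:ℂ)-(y:ℂ)*I)/2)*hcC) - ((c*conj d)*hbB + ((1-(z:ℂ))/2)*hcD) - ((d*conj c)*haA + ((1+(z:ℂ))/2)*hdC) + ((d*conj d)*hbA + (((x:ℂ)+(y:ℂ)*I)/2)*hdD)) + ((y:ℂ)*(z:ℂ)/4) * Complex.I_sq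
    simp only [Fin.isValue, Fin.mk_zero, Fin.mk_one, show ((⟨2, by norm_num⟩ : Fin 3)) = (2 : Fin 3) from rfl,
      Matrix.cons_val_zero, Matrix.cons_val_one, Matrix.head_cons, Matrix.cons_val_two, Matrix.tail_cons] at h ⊢
    rw [h]
    simp [Complex.add_im, Complex.ofReal_im, Complex.mul_im, Complex.ofReal_re,
      Complex.I_im, Complex.I_re, ← Complex.ofReal_pow] <;> ring
  · -- (2,0)
    have h : (![(conj a*d + conj b*c)/2, I*(conj b*c - conj a*d)/2, (conj a*c - conj b*d)/2] : Fin 3 → ℂ) 2 *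
        conj ((![(conj a*d + conj b*c)/2, I*(conj b*c - conj a*d)/2, (conj a*c - conj b*d)/2] : Fin 3 → ℂ) 0) = ((-(x*z)/4 : ℝ) : ℂ) + ((y/4 : ℝ) : ℂ)*I := by
      simp only [Matrix.cons_val_zero, Matrix.cons_val_one, Matrix.head_cons, Matrix.cons_val_two,
        Matrix.tail_cons, map_div₀, map_add, map_sub, _root_.map_mul, Complex.conj_conj,
        Complex.conj_I, Complex.conj_ofReal, map_ofNat]
      push_cast
      linear_combination (1/4 : ℂ) * (((c*conj d)*haA + ((1+(z:ℂ))/2)*hcD) + ((c*conj c)*hbA + (((x:ℂ)+(y:ℂ)*I)/2)*hcC) - ((d*conj d)*haB + (((x:ℂ)-(y:ℂ)*I)/2)*hdD) - ((d*conj c)*hbB + ((1-(z:ℂ))/2)*hdC))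
    simp only [Fin.isValue, Fin.mk_zero, Fin.mk_one, show ((⟨2, by norm_num⟩ : Fin 3)) = (2 : Fin 3) from rfl,
      Matrix.cons_val_zero, Matrix.cons_val_one, Matrix.head_cons, Matrix.cons_val_two, Matrix.tail_cons] at h ⊢
    rw [h]
    simp [Complex.add_im, Complex.ofReal_im, Complex.mul_im, Complex.ofReal_re,
      Complex.I_im, Complex.I_re, ← Complex.ofReal_pow] <;> ring
  · -- (2,1)
    have h : (![(conj a*d + conj b*c)/2, I*(conj b*c - conj a*d)/2, (conj a*c - conj b*d)/2] : Fin 3 → ℂ) 2 *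
        conj ((![(conj a*d + conj b*c)/2, I*(conj b*c - conj a*d)/2, (conj a*c - conj b*d)/2] : Fin 3 → ℂ) 1) = ((-(y*z)/4 : ℝ) : ℂ) + ((-(x/4) : ℝ) : ℂ)*I := by
      simp only [Matrix.cons_val_zero, Matrix.cons_val_one, Matrix.head_cons, Matrix.cons_val_two,
        Matrix.tail_cons, map_div₀, map_add, map_sub, _root_.map_mul, Complex.conj_conj,
        Complex.conj_I, Complex.conj_ofReal, map_ofNat]
      push_cast
      linear_combination (-I/4 : ℂ) * (((c*conj c)*hbA + (((x:ℂ)+(y:ℂ)*I)/2)*hcC) - ((c*conj d)*haA + ((1+(z:ℂ))/2)*hcD) - ((d*conj c)*hbB + ((1-(z:ℂ))/2)*hdC) + ((d*conj d)*haB + (((x:ℂ)-(y:ℂ)*I)/2)*hdD)) + ((y:ℂ)*(z:ℂ)/4) * Complex.I_sq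
    simp only [Fin.isValue, Fin.mk_zero, Fin.mk_one, show ((⟨2, by norm_num⟩ : Fin 3)) = (2 : Fin 3) from rfl,
      Matrix.cons_val_zero, Matrix.cons_val_one, Matrix.head_cons, Matrix.cons_val_two, Matrix.tail_cons] at h ⊢
    rw [h]
    simp [Complex.add_im, Complex.ofReal_im, Complex.mul_im, Complex.ofReal_re,
      Complex.I_im, Complex.I_re, ← Complex.ofReal_pow] <;> ring
  · -- (2,2)
    have h : (![(conj a*d + conj b*c)/2, I*(conj b*c - conj a*d)/2, (conj a*c - conj b*d)/2] : Fin 3 → ℂ) 2 *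
        conj ((![(conj a*d + conj b*c)/2, I*(conj b*c - conj a*d)/2, (conj a*c - conj b*d)/2] : Fin 3 → ℂ) 2) = (((1-z^2+x^2+y^2)/8 : ℝ) : ℂ) := by
      simp only [Matrix.cons_val_zero, Matrix.cons_val_one, Matrix.head_cons, Matrix.cons_val_two,
        Matrix.tail_cons, map_div₀, map_add, map_sub, _root_.map_mul, Complex.conj_conj,
        Complex.conj_I, Complex.conj_ofReal, map_ofNat]
      push_cast
      linear_combination (1/4 : ℂ) * (((c*conj c)*haA + ((1+(z:ℂ))/2)*hcC) - ((c*conj d)*hbA + (((x:ℂ)+(y:ℂ)*I)/2)*hcD) - ((d*conj c)*haB + (((x:ℂ)-(y:ℂ)*I)/2)*hdC) + ((d*conj d)*hbB + ((1-(z:ℂ))/2)*hdD)) - ((y:ℂ)^2/8) * Complex.I_sq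
    simp only [Fin.isValue, Fin.mk_zero, Fin.mk_one, show ((⟨2, by norm_num⟩ : Fin 3)) = (2 : Fin 3) from rfl,
      Matrix.cons_val_zero, Matrix.cons_val_one, Matrix.head_cons, Matrix.cons_val_two, Matrix.tail_cons] at h ⊢
    rw [h]
    simp [Complex.add_im, Complex.ofReal_im, Complex.mul_im, Complex.ofReal_re,
      Complex.I_im, Complex.I_re, ← Complex.ofReal_pow] <;> ring

/-- principal-value vanishing of the second-order current contribution.
For the Weyl matrix elements `D^k_{+−}(ω) = ⟨Ψ_+(ω), ½σ_k Ψ_−(ω)⟩`, any `v ∈ ℝ³` and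
`0 < r₁ < r₂ < ∞`, the shell integral
`∫_{r₁<|p|<r₂} v·Im(D_{+−}(p/|p|) D^k_{−+}(p/|p|)) / |p|² dp` vanishes for each `k`;
consequently the principal value over `ℝ³` of the same integrand is zero. -/
theorem pv_second_order_current_vanishes
    (Ψp Ψm : EuclideanSpace ℝ (Fin 3) → (Fin 2 → ℂ))
    (hmeasp : Measurable Ψp) (hmeasm : Measurable Ψm)
    (hnormp : ∀ ω : EuclideanSpace ℝ (Fin 3), ‖ω‖ = 1 → star (Ψp ω) ⬝ᵥ Ψp ω = 1)
    (hnormm : ∀ ω : EuclideanSpace ℝ (Fin 3), ‖ω‖ = 1 → star (Ψm ω) ⬝ᵥ Ψm ω = 1)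
    (heigp : ∀ ω : EuclideanSpace ℝ (Fin 3), ‖ω‖ = 1 →
      (∑ i, ((ω i : ℝ) : ℂ) • pauli i) *ᵥ Ψp ω = Ψp ω)
    (heigm : ∀ ω : EuclideanSpace ℝ (Fin 3), ‖ω‖ = 1 →
      (∑ i, ((ω i : ℝ) : ℂ) • pauli i) *ᵥ Ψm ω = -(Ψm ω))
    (D : Fin 3 → EuclideanSpace ℝ (Fin 3) → ℂ)
    (hD : ∀ k ω, D k ω = star (Ψp ω) ⬝ᵥ ((((1:ℂ)/2) • pauli k) *ᵥ Ψm ω))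
    (v : Fin 3 → ℝ) (r₁ r₂ : ℝ) (h₁ : 0 < r₁) (h₁₂ : r₁ < r₂) :
    (∀ k : Fin 3,
      (∫ p in {p : EuclideanSpace ℝ (Fin 3) | r₁ < ‖p‖ ∧ ‖p‖ < r₂},
          (∑ j, v j * (D j (‖p‖⁻¹ • p) * starRingEnd ℂ (D k (‖p‖⁻¹ • p))).im) / ‖p‖^2)
        = 0) ∧
    (∀ k : Fin 3,
      Tendsto (fun n : ℕ =>
          ∫ p in {p : EuclideanSpace ℝ (Fin 3) | 1 / (n + 1 : ℝ) < ‖p‖ ∧ ‖p‖ < (n + 1 : ℝ)},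
            (∑ j, v j * (D j (‖p‖⁻¹ • p) * starRingEnd ℂ (D k (‖p‖⁻¹ • p))).im) / ‖p‖^2)
        atTop (nhds 0)) := by
  -- the pointwise formula for the imaginary parts
  have claim : ∀ ω : EuclideanSpace ℝ (Fin 3), ‖ω‖ = 1 → ∀ j k : Fin 3,
      (D j ω * starRingEnd ℂ (D k ω)).im
        = (![![0, ω 2, -(ω 1)], ![-(ω 2), 0, ω 0], ![ω 1, -(ω 0), 0]]) j k / 4 := by
    intro ω hω j k
    have h0 := congrFun (heigp ω hω) 0
    have h1 := congrFun (heigp ω hω) 1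
    have h2 := congrFun (heigm ω hω) 0
    have h3 := congrFun (heigm ω hω) 1
    simp only [mulVec, dotProduct, pauli, Pi.neg_apply, coe_smul, Fin.isValue,
      Fin.sum_univ_three, cons_val_zero, smul_of, smul_cons, smul_zero, real_smul, mul_one,
      smul_empty, cons_val_one, head_cons, smul_neg, of_add_of, add_cons, add_zero, tail_cons,
      empty_add_empty, cons_val_two, Nat.succ_eq_add_one, Nat.reduceAdd, Matrix.add_apply, of_apply,
      cons_val', empty_val', cons_val_fin_one, Fin.sum_univ_two, zero_add, head_fin_const,
      neg_mul] at h0 h1 h2 h3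
    have hn1 := hnormp ω hω
    have hn2 := hnormm ω hω
    simp only [dotProduct, Pi.star_apply, RCLike.star_def, Fin.sum_univ_two, Fin.isValue]
      at hn1 hn2
    set a := Ψp ω 0; set b := Ψp ω 1; set c := Ψm ω 0; set d := Ψm ω 1
    have e1 : ((ω 2 : ℝ):ℂ)*a + (((ω 0 : ℝ):ℂ) - ((ω 1 : ℝ):ℂ)*I)*b = a := by linear_combination h0
    have e2 : (((ω 0 : ℝ):ℂ) + ((ω 1 : ℝ):ℂ)*I)*a - ((ω 2 : ℝ):ℂ)*b = b := by linear_combination h1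
    have e3 : ((ω 2 : ℝ):ℂ)*c + (((ω 0 : ℝ):ℂ) - ((ω 1 : ℝ):ℂ)*I)*d = -c := by linear_combination h2
    have e4 : (((ω 0 : ℝ):ℂ) + ((ω 1 : ℝ):ℂ)*I)*c - ((ω 2 : ℝ):ℂ)*d = -d := by linear_combination h3
    have hDvec : ∀ m : Fin 3, D m ω =
        (![(conj a*d + conj b*c)/2, I*(conj b*c - conj a*d)/2, (conj a*c - conj b*d)/2]) m := by
      intro m
      have hdm := hD m ω
      fin_cases m <;>
        simp only [Fin.zero_eta, Fin.mk_one, Fin.isValue,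
          show ((⟨2, by norm_num⟩ : Fin 3)) = (2 : Fin 3) from rfl,
          cons_val_zero, cons_val_one, head_cons, cons_val_two, tail_cons] <;>
        · rw [hD _ ω]
          simp only [Fin.isValue, dotProduct, Pi.star_apply, RCLike.star_def, mulVec, one_div,
            pauli, cons_val_zero, Matrix.smul_apply, of_apply, cons_val', empty_val', cons_val_fin_one,
            smul_eq_mul, Fin.sum_univ_two, cons_val_one, head_cons, mul_zero, zero_mul, mul_one,
            zero_add, head_fin_const, add_zero, mul_neg, neg_mul, cons_val_two,
            Nat.succ_eq_add_one, Nat.reduceAdd, tail_cons]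
          ring
    rw [hDvec j, hDvec k]
    exact weyl_im (ω 0) (ω 1) (ω 2) a b c d e1 e2 e3 e4 hn1 hn2 j k
  -- the integrand
  set f : Fin 3 → EuclideanSpace ℝ (Fin 3) → ℝ := fun k p =>
    (∑ j, v j * (D j (‖p‖⁻¹ • p) * starRingEnd ℂ (D k (‖p‖⁻¹ • p))).im) / ‖p‖^2 with hf
  -- oddness
  have hodd : ∀ (k : Fin 3) (p : EuclideanSpace ℝ (Fin 3)), f k (-p) = - f k p := by
    intro k p
    by_cases hp : p = 0
    · subst hp; simp [hf]
    · have hnorm : ‖(-p : EuclideanSpace ℝ (Fin 3))‖ = ‖p‖ := norm_neg p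
      have hωu : ‖(‖p‖⁻¹ • p : EuclideanSpace ℝ (Fin 3))‖ = 1 := norm_smul_inv_norm hp
      have hωu' : ‖(-(‖p‖⁻¹ • p) : EuclideanSpace ℝ (Fin 3))‖ = 1 := by
        rw [norm_neg]; exact hωu
      have hsm : (‖(-p : EuclideanSpace ℝ (Fin 3))‖⁻¹ • (-p) : EuclideanSpace ℝ (Fin 3))
          = -(‖p‖⁻¹ • p) := by rw [hnorm, smul_neg]
      have hc1 := claim (‖p‖⁻¹ • p) hωu
      have hc2 := claim (-(‖p‖⁻¹ • p)) hωu'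
      simp only [hf, hnorm, smul_neg]
      simp only [hc1, hc2]
      have hneg : ∀ i : Fin 3, (-(‖p‖⁻¹ • p) : EuclideanSpace ℝ (Fin 3)) i
          = -((‖p‖⁻¹ • p : EuclideanSpace ℝ (Fin 3)) i) := fun i => rfl
      simp only [hneg]
      fin_cases k <;>
        simp [Fin.sum_univ_three] <;> ring
  -- vanishing on any shell
  have hzero : ∀ (s t : ℝ) (k : Fin 3),
      (∫ p in {p : EuclideanSpace ℝ (Fin 3) | s < ‖p‖ ∧ ‖p‖ < t}, f k p) = 0 := by
    intro s t k
    set S : Set (EuclideanSpace ℝ (Fin 3)) := {p | s < ‖p‖ ∧ ‖p‖ < t} with hSdef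
    have hS : MeasurableSet S := by
      have : S = (fun p : EuclideanSpace ℝ (Fin 3) => ‖p‖) ⁻¹' (Set.Ioo s t) := rfl
      rw [this]
      exact measurable_norm measurableSet_Ioo
    have hind : ∫ p in S, f k p = ∫ p, S.indicator (f k) p := (integral_indicator hS).symm
    have hgodd : ∀ p, S.indicator (f k) (-p) = - S.indicator (f k) p := by
      intro p
      by_cases hp : p ∈ S
      · have hp' : -p ∈ S := by
          simp only [hSdef, Set.mem_setOf_eq, norm_neg] at hp ⊢; exact hp
        rw [Set.indicator_of_mem hp' (f k), Set.indicator_of_mem hp (f k), hodd]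
      · have hp' : -p ∉ S := by
          simp only [hSdef, Set.mem_setOf_eq, norm_neg] at hp ⊢; exact hp
        rw [Set.indicator_of_notMem hp' (f k), Set.indicator_of_notMem hp (f k), neg_zero]
    have h1 : ∫ p, S.indicator (f k) p = ∫ p, S.indicator (f k) (-p) :=
      (integral_neg_eq_self (S.indicator (f k)) volume).symm
    have h2 : ∫ p, S.indicator (f k) (-p) = - ∫ p, S.indicator (f k) p := by
      simp only [hgodd]; exact integral_neg _
    have : ∫ p, S.indicator (f k) p = 0 := by linarith [h1.trans h2]
    rw [hind, this]
  constructor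
  · intro k; exact hzero r₁ r₂ k
  · intro k
    have : (fun n : ℕ =>
        ∫ p in {p : EuclideanSpace ℝ (Fin 3) | 1 / (n + 1 : ℝ) < ‖p‖ ∧ ‖p‖ < (n + 1 : ℝ)},
          (∑ j, v j * (D j (‖p‖⁻¹ • p) * starRingEnd ℂ (D k (‖p‖⁻¹ • p))).im) / ‖p‖^2)
        = fun _ : ℕ => (0:ℝ) := funext fun n => hzero _ _ k
    rw [this]
    exact tendsto_const_nhds

end
end
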